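/- Fix k ∈ ℕ and a bounded continuous function f: ℝ^k → ℝ. Then the map G_f: PSD → ℝ defined by G_f(L) = ∫_{ℝ^k} f dμ_{0,L} is continuous with respect to the metric on PSD induced by the operator norm. -/

import Mathlib

open MeasureTheory ProbabilityTheory Filter

noncomputable section

/-- Projection of `ℝ^n` onto the first `k` coordinates (junk `0` beyond `n`). -/
def projk (k n : ℕ) (x : EuclideanSpace ℝ (Fin n)) : EuclideanSpace ℝ (Fin k) :=
  (EuclideanSpace.equiv (Fin k) ℝ).symm fun i => if h : (i : ℕ) < n then x ⟨i, h⟩ else 0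

/-- Extension of a vector of `ℝ^k` to `ℝ^n` by appending zeros. -/
def extendk {k : ℕ} (n : ℕ) (v : EuclideanSpace ℝ (Fin k)) : EuclideanSpace ℝ (Fin n) :=
  (EuclideanSpace.equiv (Fin n) ℝ).symm fun i => if h : (i : ℕ) < k then v ⟨i, h⟩ else 0

/-- The matrix of the orthogonal projection of `ℝ^k` onto the span of `v` (zero if `v = 0`). -/
def projMatrix {k : ℕ} (v : EuclideanSpace ℝ (Fin k)) : Matrix (Fin k) (Fin k) ℝ :=
  (‖v‖ ^ 2)⁻¹ • Matrix.vecMulVec (fun i => v i) (fun i => v i)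

/-- The Gaussian measure on `ℝ^k` with mean `ρ` and positive-semidefinite covariance matrix `L`,
realized as the pushforward of the standard Gaussian under `x ↦ ρ + √L x`
(zero junk measure if `L` is not positive semidefinite). -/
def gaussianOf {k : ℕ} (ρ : EuclideanSpace ℝ (Fin k)) (L : Matrix (Fin k) (Fin k) ℝ) :
    Measure (EuclideanSpace ℝ (Fin k)) :=
  open Classical in
  if hL : L.PosSemidef then
    Measure.map (fun x : Fin k → ℝ =>
        ρ + (EuclideanSpace.equiv (Fin k) ℝ).symm ((hL.1.eigenvectorUnitary.1 *
          Matrix.diagonal ((RCLike.ofReal : ℝ → ℝ) ∘ Real.sqrt ∘ hL.1.eigenvalues) *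
          (star hL.1.eigenvectorUnitary : Matrix (Fin k) (Fin k) ℝ)).mulVec x))
      (Measure.pi fun _ : Fin k => gaussianReal 0 1)
  else 0

/-- The uniform probability measure on a set `S ⊆ ℝ^n`, namely the `d`-dimensional Hausdorff
measure restricted to `S` and normalized to total mass 1. -/
def unifProb {n : ℕ} (d : ℝ) (S : Set (EuclideanSpace ℝ (Fin n))) :
    Measure (EuclideanSpace ℝ (Fin n)) :=
  (μH[d] S)⁻¹ • (μH[d]).restrict S

/-- The great-circle slice `S_{n,u⁽¹⁾,…,u⁽ᵞ⁾}`: the sphere `S^{n-1}(√n)` intersected with the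
orthogonal complements of the truncations/extensions `(u⁽ⁱ⁾)_(n)` of vectors `u⁽ⁱ⁾ ∈ ℝ^m`. -/
def Sslice {m γ : ℕ} (u : Fin γ → EuclideanSpace ℝ (Fin m)) (n : ℕ) :
    Set (EuclideanSpace ℝ (Fin n)) :=
  Metric.sphere 0 (Real.sqrt n) ∩
    {x | ∀ i, (inner ℝ x ((EuclideanSpace.equiv (Fin n) ℝ).symm
      fun j => if h : (j : ℕ) < m then u i ⟨j, h⟩ else 0) : ℝ) = 0}

end

noncomputable section

open Matrix

set_option synthInstance.maxHeartbeats 1000000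
set_option maxHeartbeats 1000000

/-- Square root of a PSD matrix (replacing the removed Mathlib definition). -/
def Matrix.PosSemidef.sqrt {k : ℕ} {A : Matrix (Fin k) (Fin k) ℝ} (hA : A.PosSemidef) :
    Matrix (Fin k) (Fin k) ℝ :=
  hA.1.eigenvectorUnitary.1 *
    Matrix.diagonal ((RCLike.ofReal : ℝ → ℝ) ∘ Real.sqrt ∘ hA.1.eigenvalues) *
    (star hA.1.eigenvectorUnitary : Matrix (Fin k) (Fin k) ℝ)

lemma Matrix.PosSemidef.posSemidef_sqrt {k : ℕ} {A : Matrix (Fin k) (Fin k) ℝ}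
    (hA : A.PosSemidef) : hA.sqrt.PosSemidef := by
  rw [Matrix.PosSemidef.sqrt, Matrix.star_eq_conjTranspose]
  exact (posSemidef_diagonal_iff.mpr fun i => by simp [Real.sqrt_nonneg]).mul_mul_conjTranspose_same _

lemma Matrix.PosSemidef.sqrt_mul_self {k : ℕ} {A : Matrix (Fin k) (Fin k) ℝ}
    (hA : A.PosSemidef) : hA.sqrt * hA.sqrt = A := by
  have hUU : (star hA.1.eigenvectorUnitary : Matrix (Fin k) (Fin k) ℝ) *
      hA.1.eigenvectorUnitary = 1 := Unitary.coe_star_mul_self _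
  conv_rhs => rw [hA.1.spectral_theorem, Unitary.conjStarAlgAut_apply]
  rw [Matrix.PosSemidef.sqrt]
  set U : Matrix (Fin k) (Fin k) ℝ := hA.1.eigenvectorUnitary.1
  set V : Matrix (Fin k) (Fin k) ℝ := (star hA.1.eigenvectorUnitary : Matrix (Fin k) (Fin k) ℝ)
  calc U * diagonal ((RCLike.ofReal : ℝ → ℝ) ∘ Real.sqrt ∘ hA.1.eigenvalues) * V *
        (U * diagonal ((RCLike.ofReal : ℝ → ℝ) ∘ Real.sqrt ∘ hA.1.eigenvalues) * V)
      = U * diagonal ((RCLike.ofReal : ℝ → ℝ) ∘ Real.sqrt ∘ hA.1.eigenvalues) * (V * U) *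
        diagonal ((RCLike.ofReal : ℝ → ℝ) ∘ Real.sqrt ∘ hA.1.eigenvalues) * V := by
        simp only [Matrix.mul_assoc]
    _ = U * diagonal ((RCLike.ofReal : ℝ → ℝ) ∘ hA.1.eigenvalues) * V := by
        rw [hUU, Matrix.mul_one, Matrix.mul_assoc U, diagonal_mul_diagonal]
        congr 3; funext i
        simp [Real.mul_self_sqrt (hA.eigenvalues_nonneg i)]

/-- Bound on a quadratic form by the operator norm. -/
lemma dot_opNorm_bound {k : ℕ} (M : Matrix (Fin k) (Fin k) ℝ) (u : Fin k → ℝ) :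
    |u ⬝ᵥ (M *ᵥ u)| ≤ ‖toEuclideanCLM (𝕜 := ℝ) M‖ * (u ⬝ᵥ u) := by
  set v : EuclideanSpace ℝ (Fin k) := (WithLp.equiv 2 _).symm u with hv
  have h1 : (toEuclideanCLM (𝕜 := ℝ) M) v = (WithLp.equiv 2 _).symm (M *ᵥ u) :=
    toEuclideanCLM_toLp M u
  have h2 : u ⬝ᵥ (M *ᵥ u) = inner ℝ v ((toEuclideanCLM (𝕜 := ℝ) M) v) := by
    rw [h1]; simp [PiLp.inner_apply, dotProduct, hv]
    exact Finset.sum_congr rfl fun i _ => mul_comm _ _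
  have h3 : u ⬝ᵥ u = ‖v‖ * ‖v‖ := by
    rw [← real_inner_self_eq_norm_mul_norm]; simp [-real_inner_self_eq_norm_sq, PiLp.inner_apply, dotProduct, hv]
    rw [EuclideanSpace.real_norm_sq_eq]; simp [Real.sq_sqrt, Finset.sum_nonneg, mul_self_nonneg, pow_two]
  rw [h2, h3]
  calc |inner ℝ v ((toEuclideanCLM (𝕜 := ℝ) M) v)| ≤ ‖v‖ * ‖(toEuclideanCLM (𝕜 := ℝ) M) v‖ :=
        abs_real_inner_le_norm _ _
    _ ≤ ‖v‖ * (‖toEuclideanCLM (𝕜 := ℝ) M‖ * ‖v‖) := by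
        gcongr; exact (toEuclideanCLM (𝕜 := ℝ) M).le_opNorm v
    _ = ‖toEuclideanCLM (𝕜 := ℝ) M‖ * (‖v‖ * ‖v‖) := by ring

/-- Each squared eigenvalue of `√A - √B` is bounded by `‖A - B‖`. -/
lemma eig_sq_bound {k : ℕ} {A B : Matrix (Fin k) (Fin k) ℝ}
    (hA : A.PosSemidef) (hB : B.PosSemidef)
    (hC : (hA.sqrt - hB.sqrt).IsHermitian) (m : Fin k) :
    (hC.eigenvalues m) ^ 2 ≤ ‖toEuclideanCLM (𝕜 := ℝ) (A - B)‖ := by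
  set C := hA.sqrt - hB.sqrt with hCdef
  set v : Fin k → ℝ := ⇑(hC.eigenvectorBasis m) with hvdef
  set lam := hC.eigenvalues m with hlam
  have hv : C *ᵥ v = lam • v := hC.mulVec_eigenvectorBasis m
  have hnorm : v ⬝ᵥ v = 1 := by
    have h := hC.eigenvectorBasis.orthonormal.1 m
    have : (inner ℝ (hC.eigenvectorBasis m) (hC.eigenvectorBasis m) : ℝ)
        = ‖hC.eigenvectorBasis m‖ ^ 2 := real_inner_self_eq_norm_sq _
    rw [h] at this
    have h2 := EuclideanSpace.real_norm_sq_eq (hC.eigenvectorBasis m)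
    rw [h] at h2
    simpa [dotProduct, hvdef, pow_two] using h2.symm
  have hsymm : ∀ w : Fin k → ℝ, v ⬝ᵥ (C *ᵥ w) = (C *ᵥ v) ⬝ᵥ w := by
    intro w
    rw [dotProduct_mulVec, ← Matrix.mulVec_transpose]
    have hT : Cᵀ = C := by
      have := hC.eq
      simpa [Matrix.conjTranspose_eq_transpose_of_trivial] using this
    rw [hT]
  have hsplit : A - B = hA.sqrt * C + C * hB.sqrt := by
    rw [hCdef]
    rw [Matrix.mul_sub, Matrix.sub_mul, hA.sqrt_mul_self, hB.sqrt_mul_self]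
    noncomm_ring
  have hkey : v ⬝ᵥ ((A - B) *ᵥ v) = lam * (v ⬝ᵥ ((hA.sqrt + hB.sqrt) *ᵥ v)) := by
    rw [hsplit, Matrix.add_mulVec, dotProduct_add, ← Matrix.mulVec_mulVec, hv,
      Matrix.mulVec_smul, dotProduct_smul, ← Matrix.mulVec_mulVec, hsymm, hv,
      smul_dotProduct, Matrix.add_mulVec, dotProduct_add]
    simp [smul_eq_mul]; ring
  have hCvv : v ⬝ᵥ (C *ᵥ v) = lam := by rw [hv, dotProduct_smul, smul_eq_mul, hnorm, mul_one]
  have hposA : 0 ≤ v ⬝ᵥ (hA.sqrt *ᵥ v) := by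
    have := hA.posSemidef_sqrt.re_dotProduct_nonneg v
    simpa using this
  have hposB : 0 ≤ v ⬝ᵥ (hB.sqrt *ᵥ v) := by
    have := hB.posSemidef_sqrt.re_dotProduct_nonneg v
    simpa using this
  set S := v ⬝ᵥ ((hA.sqrt + hB.sqrt) *ᵥ v) with hS
  have habs : |lam| ≤ S := by
    rw [abs_le]
    constructor
    · have : 0 ≤ v ⬝ᵥ ((hA.sqrt + hB.sqrt + C) *ᵥ v) := by
        have : hA.sqrt + hB.sqrt + C = hA.sqrt + hA.sqrt := by rw [hCdef]; noncomm_ring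
        rw [this, Matrix.add_mulVec, dotProduct_add]
        linarith
      rw [Matrix.add_mulVec, dotProduct_add, hCvv] at this
      linarith
    · have : 0 ≤ v ⬝ᵥ ((hA.sqrt + hB.sqrt - C) *ᵥ v) := by
        have : hA.sqrt + hB.sqrt - C = hB.sqrt + hB.sqrt := by rw [hCdef]; noncomm_ring
        rw [this, Matrix.add_mulVec, dotProduct_add]
        linarith
      rw [Matrix.sub_mulVec, dotProduct_sub, hCvv] at this
      linarith
  have hS0 : 0 ≤ S := le_trans (abs_nonneg _) habs
  have hstep : lam ^ 2 ≤ |lam * S| := by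
    rw [abs_mul, abs_of_nonneg hS0, pow_two]
    calc lam * lam ≤ |lam| * |lam| := by
          rw [← abs_mul]; exact le_abs_self _
      _ ≤ |lam| * S := by gcongr
  calc lam ^ 2 ≤ |lam * S| := hstep
    _ = |v ⬝ᵥ ((A - B) *ᵥ v)| := by rw [hkey]
    _ ≤ ‖toEuclideanCLM (𝕜 := ℝ) (A - B)‖ * (v ⬝ᵥ v) := dot_opNorm_bound _ _
    _ = ‖toEuclideanCLM (𝕜 := ℝ) (A - B)‖ := by rw [hnorm, mul_one]

/-- Trace of `C ^ 2` equals the sum of the squared eigenvalues, for Hermitian `C`. -/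
lemma trace_sq_eq {k : ℕ} {C : Matrix (Fin k) (Fin k) ℝ} (hC : C.IsHermitian) :
    (C * C).trace = ∑ m, (hC.eigenvalues m) ^ 2 := by
  set U : Matrix (Fin k) (Fin k) ℝ := (hC.eigenvectorUnitary : Matrix (Fin k) (Fin k) ℝ) with hU
  set D : Matrix (Fin k) (Fin k) ℝ := diagonal (RCLike.ofReal ∘ hC.eigenvalues) with hD
  have hspec : C = U * D * star U := by
    conv_lhs => rw [hC.spectral_theorem, Unitary.conjStarAlgAut_apply]
  have hUU : star U * U = 1 := (Matrix.mem_unitaryGroup_iff').mp hC.eigenvectorUnitary.2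
  have hCC : C * C = U * (D * D) * star U := by
    rw [hspec]
    calc (U * D * star U) * (U * D * star U) = U * D * (star U * U) * D * star U := by
          noncomm_ring
      _ = U * (D * D) * star U := by rw [hUU]; noncomm_ring
  rw [hCC, Matrix.trace_mul_cycle, ← Matrix.mul_assoc, hUU, Matrix.one_mul]
  rw [hD]
  simp [Matrix.diagonal_mul_diagonal, Matrix.trace_diagonal, pow_two]

/-- The Frobenius norm squared equals the trace of `C ^ 2`, for symmetric real `C`. -/
lemma frob_eq_trace {k : ℕ} {C : Matrix (Fin k) (Fin k) ℝ} (hC : C.IsHermitian) :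
    ∑ i, ∑ j, (C i j) ^ 2 = (C * C).trace := by
  rw [Matrix.trace]
  congr 1; ext i
  rw [Matrix.diag, Matrix.mul_apply]
  congr 1; ext j
  rw [pow_two]
  congr 1
  have := hC.apply j i
  simpa using this

/-- Entrywise bound on the difference of square roots of PSD matrices. -/
lemma sqrt_entry_bound {k : ℕ} {A B : Matrix (Fin k) (Fin k) ℝ}
    (hA : A.PosSemidef) (hB : B.PosSemidef) (i j : Fin k) :
    |(hA.sqrt - hB.sqrt) i j| ≤ Real.sqrt ((k : ℝ) * ‖toEuclideanCLM (𝕜 := ℝ) (A - B)‖) := by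
  have hC : (hA.sqrt - hB.sqrt).IsHermitian :=
    hA.posSemidef_sqrt.1.sub hB.posSemidef_sqrt.1
  set C := hA.sqrt - hB.sqrt with hCdef
  have h1 : (C i j) ^ 2 ≤ ∑ i', ∑ j', (C i' j') ^ 2 := by
    calc (C i j) ^ 2 ≤ ∑ j', (C i j') ^ 2 :=
          Finset.single_le_sum (f := fun j' => (C i j') ^ 2)
            (fun _ _ => sq_nonneg _) (Finset.mem_univ j)
      _ ≤ ∑ i', ∑ j', (C i' j') ^ 2 :=
          Finset.single_le_sum (f := fun i' => ∑ j', (C i' j') ^ 2)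
            (fun _ _ => Finset.sum_nonneg fun _ _ => sq_nonneg _) (Finset.mem_univ i)
  have h2 : ∑ i', ∑ j', (C i' j') ^ 2 = ∑ m, (hC.eigenvalues m) ^ 2 :=
    (frob_eq_trace hC).trans (trace_sq_eq hC)
  have h3 : ∑ m, (hC.eigenvalues m) ^ 2 ≤ (k : ℝ) * ‖toEuclideanCLM (𝕜 := ℝ) (A - B)‖ := by
    calc ∑ m, (hC.eigenvalues m) ^ 2
        ≤ ∑ _m : Fin k, ‖toEuclideanCLM (𝕜 := ℝ) (A - B)‖ :=
          Finset.sum_le_sum fun m _ => eig_sq_bound hA hB hC m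
      _ = (k : ℝ) * ‖toEuclideanCLM (𝕜 := ℝ) (A - B)‖ := by
          simp [Finset.sum_const, Finset.card_univ, nsmul_eq_mul]
  have h4 := Real.sqrt_le_sqrt (le_trans h1 (h2 ▸ h3))
  rwa [Real.sqrt_sq_eq_abs] at h4

/-- The Gaussian integral as an integral against the standard Gaussian. -/
lemma integral_gaussianOf {k : ℕ} (f : EuclideanSpace ℝ (Fin k) → ℝ) (hfc : Continuous f)
    {L : Matrix (Fin k) (Fin k) ℝ} (hL : L.PosSemidef) :
    ∫ x, f x ∂(gaussianOf 0 L)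
      = ∫ x, f ((EuclideanSpace.equiv (Fin k) ℝ).symm (hL.sqrt *ᵥ x))
          ∂(Measure.pi fun _ : Fin k => gaussianReal 0 1) := by
  have hcont : Continuous (fun x : Fin k → ℝ =>
      (0 : EuclideanSpace ℝ (Fin k)) + (EuclideanSpace.equiv (Fin k) ℝ).symm (hL.sqrt *ᵥ x)) := by
    apply Continuous.add continuous_const
    exact (EuclideanSpace.equiv (Fin k) ℝ).symm.continuous.comp
      ((continuous_const (y := hL.sqrt)).matrix_mulVec continuous_id)
  rw [gaussianOf, dif_pos hL]
  change ∫ x, f x ∂(Measure.map (fun x : Fin k → ℝ => (0 : EuclideanSpace ℝ (Fin k)) +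
    (EuclideanSpace.equiv (Fin k) ℝ).symm (hL.sqrt *ᵥ x)) (Measure.pi fun _ : Fin k => gaussianReal 0 1)) = _
  rw [integral_map hcont.aemeasurable hfc.aestronglyMeasurable]
  simp

/-- **Continuity of the Gaussian expectation in the covariance.**
For a bounded continuous `f : ℝ^k → ℝ`, the map `G_f` sending a positive-semidefinite `k × k`
matrix `L` to `∫ f dμ_{0,L}` (the Gaussian measure with mean `0` and covariance `L`) is
continuous on PSD with respect to the metric induced by the operator norm. -/
theorem stmt6 {k : ℕ} (f : EuclideanSpace ℝ (Fin k) → ℝ)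
    (hfc : Continuous f) (hfb : ∃ C, ∀ x, |f x| ≤ C) :
    ∀ L : Matrix (Fin k) (Fin k) ℝ, L.PosSemidef →
      ∀ ε : ℝ, 0 < ε → ∃ δ : ℝ, 0 < δ ∧
        ∀ L' : Matrix (Fin k) (Fin k) ℝ, L'.PosSemidef →
          ‖(Matrix.toEuclideanCLM (𝕜 := ℝ) L' : EuclideanSpace ℝ (Fin k) →L[ℝ] EuclideanSpace ℝ (Fin k))
            - Matrix.toEuclideanCLM (𝕜 := ℝ) L‖ < δ →
          |(∫ x, f x ∂ (gaussianOf (0 : EuclideanSpace ℝ (Fin k)) L'))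
            - ∫ x, f x ∂ (gaussianOf (0 : EuclideanSpace ℝ (Fin k)) L)| < ε := by
  obtain ⟨Cb, hCb⟩ := hfb
  intro L hL ε hε
  by_contra hcon
  push_neg at hcon
  choose Ls h1 h2 h3 using fun n : ℕ => hcon (1 / (n + 1)) (by positivity)
  set γ : Measure (Fin k → ℝ) := Measure.pi fun _ : Fin k => gaussianReal 0 1 with hγ
  -- operator norm of difference tends to zero
  have hNorm : ∀ n : ℕ, ‖toEuclideanCLM (𝕜 := ℝ) (Ls n - L)‖ < 1 / (n + 1) := by
    intro n; rw [map_sub]; exact h2 n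
  have hN0 : Tendsto (fun n : ℕ => ‖toEuclideanCLM (𝕜 := ℝ) (Ls n - L)‖) atTop (nhds 0) :=
    squeeze_zero (fun n => norm_nonneg _) (fun n => (hNorm n).le)
      tendsto_one_div_add_atTop_nhds_zero_nat
  -- square roots converge entrywise
  have hsq : Tendsto (fun n => (h1 n).sqrt) atTop (nhds hL.sqrt) := by
    refine tendsto_pi_nhds.mpr fun i => tendsto_pi_nhds.mpr fun j => ?_
    have hbd : ∀ n : ℕ, ‖(h1 n).sqrt i j - hL.sqrt i j‖
        ≤ Real.sqrt ((k : ℝ) * ‖toEuclideanCLM (𝕜 := ℝ) (Ls n - L)‖) := by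
      intro n
      have := sqrt_entry_bound (h1 n) hL i j
      simpa [Matrix.sub_apply, Real.norm_eq_abs] using this
    have hrhs : Tendsto (fun n : ℕ =>
        Real.sqrt ((k : ℝ) * ‖toEuclideanCLM (𝕜 := ℝ) (Ls n - L)‖)) atTop (nhds 0) := by
      have h0 : Tendsto (fun n : ℕ => (k : ℝ) * ‖toEuclideanCLM (𝕜 := ℝ) (Ls n - L)‖)
          atTop (nhds 0) := by simpa using hN0.const_mul (k : ℝ)
      have := (Real.continuous_sqrt.tendsto 0).comp h0
      rw [Real.sqrt_zero] at this
      exact this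
    have hdiff : Tendsto (fun n => (h1 n).sqrt i j - hL.sqrt i j) atTop (nhds 0) :=
      squeeze_zero_norm hbd hrhs
    exact tendsto_sub_nhds_zero_iff.mp hdiff
  -- pointwise convergence of the integrands
  have hptw : ∀ x : Fin k → ℝ,
      Tendsto (fun n => f ((EuclideanSpace.equiv (Fin k) ℝ).symm ((h1 n).sqrt *ᵥ x))) atTop
        (nhds (f ((EuclideanSpace.equiv (Fin k) ℝ).symm (hL.sqrt *ᵥ x)))) := by
    intro x
    have hφ : Continuous fun M : Matrix (Fin k) (Fin k) ℝ =>
        f ((EuclideanSpace.equiv (Fin k) ℝ).symm (M *ᵥ x)) :=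
      hfc.comp ((EuclideanSpace.equiv (Fin k) ℝ).symm.continuous.comp
        (continuous_id.matrix_mulVec continuous_const))
    exact (hφ.tendsto _).comp hsq
  -- dominated convergence
  have hmeas : ∀ n : ℕ, AEStronglyMeasurable
      (fun x : Fin k → ℝ => f ((EuclideanSpace.equiv (Fin k) ℝ).symm ((h1 n).sqrt *ᵥ x))) γ := by
    intro n
    exact (hfc.comp ((EuclideanSpace.equiv (Fin k) ℝ).symm.continuous.comp
      ((continuous_const (y := (h1 n).sqrt)).matrix_mulVec continuous_id))).aestronglyMeasurable
  have htend : Tendsto (fun n => ∫ x, f x ∂(gaussianOf 0 (Ls n))) atTop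
      (nhds (∫ x, f x ∂(gaussianOf (0 : EuclideanSpace ℝ (Fin k)) L))) := by
    have h4 : (fun n => ∫ x, f x ∂(gaussianOf (0 : EuclideanSpace ℝ (Fin k)) (Ls n)))
        = fun n => ∫ x, f ((EuclideanSpace.equiv (Fin k) ℝ).symm ((h1 n).sqrt *ᵥ x)) ∂γ :=
      funext fun n => integral_gaussianOf f hfc (h1 n)
    rw [h4, integral_gaussianOf f hfc hL]
    exact tendsto_integral_of_dominated_convergence (fun _ => Cb) hmeas (integrable_const Cb)
      (fun n => Filter.Eventually.of_forall fun x => by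
        simpa [Real.norm_eq_abs] using hCb _)
      (Filter.Eventually.of_forall hptw)
  obtain ⟨N, hN⟩ := (Metric.tendsto_atTop.mp htend) ε hε
  have hd := hN N le_rfl
  rw [Real.dist_eq] at hd
  exact absurd hd (not_lt.mpr (h3 N))

end
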